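/- Let N ≥ 1, λ > 0, let G : (0,1)^N → ℝ, and let l(q,q₀) = q·log(q/q₀) + (1−q)·log((1−q)/(1−q₀)). Let Q^t, Q^{t+1} ∈ (0,1)^N and suppose that for each i ∈ {1,…,N}, the coordinate q_i^{t+1} minimizes over q ∈ (0,1) the function q ↦ G(q_1^{t+1},…,q_{i−1}^{t+1}, q, q_{i+1}^t,…,q_N^t) + λ·l(q, q_i^t). Then G(Q^{t+1}) + λ·Σ_{i=1}^N l(q_i^{t+1}, q_i^t) ≤ G(Q^t), and consequently, by 1-strong convexity of l(·,q₀), the sufficient decrease inequality G(Q^{t+1}) + (λ/2)·‖Q^{t+1} − Q^t‖² ≤ G(Q^t) holds, where ‖·‖ is the Euclidean norm on ℝ^N. -/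

import Mathlib

open Real Set in
lemma bern_kl_ge (a b : ℝ) (ha : a ∈ Set.Ioo (0:ℝ) 1) (hb : b ∈ Set.Ioo (0:ℝ) 1) :
    (a - b) ^ 2 / 2 ≤ a * Real.log (a / b) + (1 - a) * Real.log ((1 - a) / (1 - b)) := by
  obtain ⟨ha0, ha1⟩ := ha
  obtain ⟨hb0, hb1⟩ := hb
  have ha1' : (0:ℝ) < 1 - a := by linarith
  have hb1' : (0:ℝ) < 1 - b := by linarith
  set φ : ℝ → ℝ := fun x => x * Real.log x + (1 - x) * Real.log (1 - x) - x ^ 2 / 2 with hφ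
  have hderiv : ∀ x ∈ Set.Ioo (0:ℝ) 1,
      HasDerivAt φ (Real.log x - Real.log (1 - x) - x) x := by
    intro x hx
    have hx0 : x ≠ 0 := ne_of_gt hx.1
    have hx1 : 1 - x ≠ 0 := by have := hx.2; intro h; apply hx.2.ne; linarith
    have t1 : HasDerivAt (fun y : ℝ => y * Real.log y) (Real.log x + 1) x :=
      Real.hasDerivAt_mul_log hx0
    have tlin : HasDerivAt (fun y : ℝ => 1 - y) (-1 : ℝ) x := by
      simpa using (hasDerivAt_id x).const_sub 1
    have t2 : HasDerivAt (fun y : ℝ => (1 - y) * Real.log (1 - y))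
        ((Real.log (1 - x) + 1) * (-1)) x :=
      (Real.hasDerivAt_mul_log hx1).comp x tlin
    have t3 : HasDerivAt (fun y : ℝ => y ^ 2 / 2) ((2 : ℕ) * x ^ 1 / 2) x :=
      (hasDerivAt_pow 2 x).div_const 2
    have := (t1.add t2).sub t3
    refine this.congr_deriv ?_
    push_cast; ring
  have hderiv2 : ∀ x ∈ Set.Ioo (0:ℝ) 1,
      HasDerivAt (fun x => Real.log x - Real.log (1 - x) - x) (x⁻¹ + (1 - x)⁻¹ - 1) x := by
    intro x hx
    have hx0 : x ≠ 0 := ne_of_gt hx.1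
    have hx1 : 1 - x ≠ 0 := by intro h; apply hx.2.ne; linarith
    have t1 : HasDerivAt Real.log x⁻¹ x := Real.hasDerivAt_log hx0
    have tlin : HasDerivAt (fun y : ℝ => 1 - y) (-1 : ℝ) x := by
      simpa using (hasDerivAt_id x).const_sub 1
    have t2 : HasDerivAt (fun y : ℝ => Real.log (1 - y)) ((1 - x)⁻¹ * (-1)) x :=
      (Real.hasDerivAt_log hx1).comp x tlin
    have := (t1.sub t2).sub (hasDerivAt_id x)
    refine this.congr_deriv ?_
    ring
  have hconv : ConvexOn ℝ (Set.Ioo (0:ℝ) 1) φ := by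
    refine convexOn_of_hasDerivWithinAt2_nonneg (convex_Ioo 0 1)
      (f' := fun x => Real.log x - Real.log (1 - x) - x)
      (f'' := fun x => x⁻¹ + (1 - x)⁻¹ - 1) ?_ ?_ ?_ ?_
    · exact fun x hx => ((hderiv x hx).differentiableAt).continuousAt.continuousWithinAt
    · rw [interior_Ioo]; exact fun x hx => (hderiv x hx).hasDerivWithinAt
    · rw [interior_Ioo]; exact fun x hx => (hderiv2 x hx).hasDerivWithinAt
    · rw [interior_Ioo]
      intro x hx
      have h1 : (1:ℝ) ≤ x⁻¹ := by
        rw [le_inv_comm₀ one_pos hx.1]; simpa using hx.2.le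
      have hx1 : (0:ℝ) < 1 - x := by linarith [hx.2]
      have h2 : (0:ℝ) < (1 - x)⁻¹ := inv_pos.mpr hx1
      linarith
  have hmain : φ b + (Real.log b - Real.log (1 - b) - b) * (a - b) ≤ φ a := by
    rcases lt_trichotomy a b with h | h | h
    · have hs := hconv.slope_le_of_hasDerivAt ⟨ha0, ha1⟩ ⟨hb0, hb1⟩ h (hderiv b ⟨hb0, hb1⟩)
      rw [slope_def_field] at hs
      have hba : (0:ℝ) < b - a := by linarith
      rw [div_le_iff₀ hba] at hs
      nlinarith [hs]
    · subst h; simp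
    · have hs := hconv.le_slope_of_hasDerivAt ⟨hb0, hb1⟩ ⟨ha0, ha1⟩ h (hderiv b ⟨hb0, hb1⟩)
      rw [slope_def_field] at hs
      have hab : (0:ℝ) < a - b := by linarith
      rw [le_div_iff₀ hab] at hs
      nlinarith [hs]
  rw [Real.log_div (ne_of_gt ha0) (ne_of_gt hb0),
    Real.log_div (ne_of_gt ha1') (ne_of_gt hb1')]
  simp only [hφ] at hmain
  nlinarith [hmain]


/-- Sufficient decrease of the proximal alternate minimization.
If each coordinate `q_i^{t+1}` minimizes over `q ∈ (0,1)` the map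
`q ↦ G(q_1^{t+1},…,q_{i−1}^{t+1}, q, q_{i+1}^t,…,q_N^t) + λ·l(q, q_i^t)`,
where `l` is the Bernoulli KL penalty, then
`G(Q^{t+1}) + λ·Σ_i l(q_i^{t+1}, q_i^t) ≤ G(Q^t)` and, by 1-strong convexity
of `l(·,q₀)`, `G(Q^{t+1}) + (λ/2)·‖Q^{t+1} − Q^t‖² ≤ G(Q^t)` (Euclidean norm). -/
theorem proximal_sufficient_decrease
    (N : ℕ) (hN : 1 ≤ N) (lam : ℝ) (hlam : 0 < lam)
    (G : (Fin N → ℝ) → ℝ)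
    (l : ℝ → ℝ → ℝ)
    (hl : ∀ q q0 : ℝ, l q q0 =
      q * Real.log (q / q0) + (1 - q) * Real.log ((1 - q) / (1 - q0)))
    (Qt Qt1 : Fin N → ℝ)
    (hQt : ∀ i, Qt i ∈ Set.Ioo (0 : ℝ) 1)
    (hQt1 : ∀ i, Qt1 i ∈ Set.Ioo (0 : ℝ) 1)
    (hmin : ∀ i : Fin N, ∀ q ∈ Set.Ioo (0 : ℝ) 1,
      G (fun j => if j < i then Qt1 j else if j = i then Qt1 i else Qt j) +
          lam * l (Qt1 i) (Qt i)
        ≤ G (fun j => if j < i then Qt1 j else if j = i then q else Qt j) +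
          lam * l q (Qt i)) :
    G Qt1 + lam * ∑ i, l (Qt1 i) (Qt i) ≤ G Qt ∧
    G Qt1 + (lam / 2) * ∑ i, (Qt1 i - Qt i) ^ 2 ≤ G Qt := by
  set v : ℕ → Fin N → ℝ := fun k j => if (j : ℕ) < k then Qt1 j else Qt j with hv
  set f : ℕ → ℝ := fun k => if h : k < N then l (Qt1 ⟨k, h⟩) (Qt ⟨k, h⟩) else 0 with hf
  have hv0 : v 0 = Qt := funext fun j => by simp [hv]
  have hvN : v N = Qt1 := funext fun j => by simp [hv, j.isLt]
  have step : ∀ k (hk : k < N),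
      G (v (k + 1)) + lam * l (Qt1 ⟨k, hk⟩) (Qt ⟨k, hk⟩) ≤ G (v k) := by
    intro k hk
    set i : Fin N := ⟨k, hk⟩ with hi
    have hii := hmin i (Qt i) (hQt i)
    have e1 : (fun j => if j < i then Qt1 j else if j = i then Qt1 i else Qt j) = v (k + 1) := by
      funext j
      simp only [hv, Fin.lt_def, Fin.ext_iff, hi]
      rcases lt_trichotomy (j : ℕ) k with h | h | h
      · simp [h, Nat.lt_succ_of_lt h]
      · have hji : j = i := Fin.ext h
        simp [h, hji, hi]
      · have h1 : ¬ (j : ℕ) < k := by omega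
        have h2 : ¬ (j : ℕ) = k := by omega
        have h3 : ¬ (j : ℕ) < k + 1 := by omega
        simp [h1, h2, h3]
    have e2 : (fun j => if j < i then Qt1 j else if j = i then Qt i else Qt j) = v k := by
      funext j
      simp only [hv, Fin.lt_def, Fin.ext_iff, hi]
      rcases lt_trichotomy (j : ℕ) k with h | h | h
      · simp [h]
      · have h1 : ¬ (j : ℕ) < k := by omega
        have hji : j = i := Fin.ext h
        simp [h, hji, hi]
      · have h1 : ¬ (j : ℕ) < k := by omega
        have h2 : ¬ (j : ℕ) = k := by omega
        simp [h1, h2]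
    have hl0 : l (Qt i) (Qt i) = 0 := by
      have h1 := (hQt i).1
      have h2 := (hQt i).2
      rw [hl, div_self (ne_of_gt h1), div_self (by linarith : (1:ℝ) - Qt i ≠ 0), Real.log_one]
      ring
    rw [e1, e2, hl0] at hii
    simpa using hii
  have key : ∀ k, k ≤ N → G (v k) + lam * ∑ j ∈ Finset.range k, f j ≤ G Qt := by
    intro k
    induction k with
    | zero => intro _; simp [hv0]
    | succ k ih =>
      intro hk
      have hkN : k < N := hk
      have h1 := step k hkN
      have h2 := ih (le_of_lt hkN)
      have hfk : f k = l (Qt1 ⟨k, hkN⟩) (Qt ⟨k, hkN⟩) := dif_pos hkN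
      rw [Finset.sum_range_succ, hfk, mul_add]
      linarith
  have hsum : ∑ i : Fin N, l (Qt1 i) (Qt i) = ∑ j ∈ Finset.range N, f j := by
    rw [← Fin.sum_univ_eq_sum_range]
    exact Finset.sum_congr rfl fun i _ => by simp [hf, i.isLt]
  have first : G Qt1 + lam * ∑ i, l (Qt1 i) (Qt i) ≤ G Qt := by
    have := key N le_rfl
    rwa [hvN, ← hsum] at this
  refine ⟨first, ?_⟩
  have hterm : ∀ i : Fin N, (Qt1 i - Qt i) ^ 2 / 2 ≤ l (Qt1 i) (Qt i) := by
    intro i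
    rw [hl]
    exact bern_kl_ge _ _ (hQt1 i) (hQt i)
  have hsum2 : ∑ i, (Qt1 i - Qt i) ^ 2 / 2 ≤ ∑ i, l (Qt1 i) (Qt i) :=
    Finset.sum_le_sum fun i _ => hterm i
  have hmul : (lam / 2) * ∑ i, (Qt1 i - Qt i) ^ 2 ≤ lam * ∑ i, l (Qt1 i) (Qt i) := by
    have h3 : (lam / 2) * ∑ i, (Qt1 i - Qt i) ^ 2 = lam * ∑ i, (Qt1 i - Qt i) ^ 2 / 2 := by
      rw [Finset.mul_sum, Finset.mul_sum]
      exact Finset.sum_congr rfl fun i _ => by ring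
    rw [h3]
    exact mul_le_mul_of_nonneg_left hsum2 hlam.le
  linarith
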